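/- (Existence of an exact value-equivalent model in the one-parameter-per-row family, part of the proof of Proposition 3.) Let n ≥ 2, let P : Matrix (Fin n) (Fin n) ℝ have nonnegative entries with each row summing to 1, and fix i : Fin n. For θ : Fin n → ℝ define the matrix P_θ by (P_θ) j j = θ j and (P_θ) j l = (1 − θ j) / (n − 1) for l ≠ j. Suppose P j i ≤ 1 / (n − 1) for every j ≠ i. Then, setting θ i = P i i and θ j = 1 − (n − 1) * P j i for j ≠ i, one has 0 ≤ θ j ≤ 1 for every j, and P_θ.mulVec e_i = P.mulVec e_i, where e_i : Fin n → ℝ is the standard basis vector with (e_i) i = 1 and (e_i) l = 0 for l ≠ i. -/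

import Mathlib

open Finset

/-- The one-parameter-per-row transition matrix: row `j` puts mass `θ j` on
`j` and spreads the rest uniformly over the other `n - 1` states. -/
noncomputable def rowParamMatrix (n : ℕ) (θ : Fin n → ℝ) :
    Matrix (Fin n) (Fin n) ℝ :=
  fun j l => if l = j then θ j else (1 - θ j) / ((n : ℝ) - 1)

/-- The standard basis vector at `i`. -/
def stdBasisVec (n : ℕ) (i : Fin n) : Fin n → ℝ :=
  fun l => if l = i then 1 else 0

/-- Existence of an exact value-equivalent model in the one-parameter-per-row
family (part of the proof of Proposition 3). -/
theorem exact_value_equivalent_row_param_model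
    (n : ℕ) (hn : 2 ≤ n) (P : Matrix (Fin n) (Fin n) ℝ)
    (hP0 : ∀ j l, 0 ≤ P j l) (hP1 : ∀ j, ∑ l, P j l = 1) (i : Fin n)
    (hcol : ∀ j, j ≠ i → P j i ≤ 1 / ((n : ℝ) - 1)) :
    ∀ θ : Fin n → ℝ,
      (θ i = P i i) → (∀ j, j ≠ i → θ j = 1 - ((n : ℝ) - 1) * P j i) →
      (∀ j, 0 ≤ θ j ∧ θ j ≤ 1) ∧
      (rowParamMatrix n θ).mulVec (stdBasisVec n i) = P.mulVec (stdBasisVec n i) := by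
  intro θ hθi hθj
  have hn1 : (0 : ℝ) < (n : ℝ) - 1 := by
    have : (2 : ℝ) ≤ (n : ℝ) := by exact_mod_cast hn
    linarith
  have hentry : ∀ j l, P j l ≤ 1 := by
    intro j l
    have := hP1 j
    calc P j l ≤ ∑ l', P j l' := Finset.single_le_sum (fun l' _ => hP0 j l') (mem_univ l)
    _ = 1 := this
  constructor
  · intro j
    by_cases hj : j = i
    · subst hj
      rw [hθi]
      exact ⟨hP0 j j, hentry j j⟩
    · rw [hθj j hj]
      have h1 := hcol j hj
      have h2 := hP0 j i
      constructor
      · have : ((n : ℝ) - 1) * P j i ≤ ((n : ℝ) - 1) * (1 / ((n : ℝ) - 1)) :=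
          mul_le_mul_of_nonneg_left h1 hn1.le
        rw [mul_one_div, div_self hn1.ne'] at this
        linarith
      · nlinarith
  · funext j
    have key : ∀ (M : Matrix (Fin n) (Fin n) ℝ), M.mulVec (stdBasisVec n i) j = M j i := by
      intro M
      simp [Matrix.mulVec, dotProduct, stdBasisVec, mul_ite]
    rw [key, key]
    by_cases hj : j = i
    · subst hj; simp [rowParamMatrix, hθi]
    · simp only [rowParamMatrix]
      rw [if_neg (by simpa using Ne.symm hj), hθj j hj]
      field_simp
      ring
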